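/- Let C ⊆ ℝⁿ be a full-dimensional polyhedral cone, let G be a finite group of linear automorphisms of ℝⁿ with g(C) = C for all g ∈ G, and let H be a subgroup of G. Set C_H = {x ∈ C : h(x) = x for all h ∈ H} and let m be the dimension of the linear span of C_H. Suppose f is a linear functional with f(x) ≥ 0 for all x ∈ C such that F = {x ∈ C : f(x) = 0} is a facet of C (a face of dimension n−1) and h(F) = F for all h ∈ H. Then F ∩ C_H = {x ∈ C_H : f(x) = 0} is a face of the cone C_H of dimension m−1, i.e. a facet of C_H. -/

import Mathlib

/-- A polyhedral cone in `ℝⁿ`: the solution set of finitely many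
linear inequalities `fᵢ(x) ≥ 0`. -/
def IsPolyhedralCone {n : ℕ} (C : Set (Fin n → ℝ)) : Prop :=
  ∃ (m : ℕ) (f : Fin m → ((Fin n → ℝ) →ₗ[ℝ] ℝ)), C = {x | ∀ i, 0 ≤ f i x}

/-- `F` is a face of `C`: there is a linear functional nonnegative on `C`
whose zero set in `C` is `F`. -/
def IsFaceOf {n : ℕ} (C F : Set (Fin n → ℝ)) : Prop :=
  ∃ f : (Fin n → ℝ) →ₗ[ℝ] ℝ, (∀ x ∈ C, 0 ≤ f x) ∧ F = {x ∈ C | f x = 0}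

/-- The dimension of a face: the dimension of its linear span. -/
noncomputable def faceDim {n : ℕ} (F : Set (Fin n → ℝ)) : ℕ :=
  Module.finrank ℝ (Submodule.span ℝ F)

/-- A cone is salient (pointed) if `C ∩ (−C) = {0}`. -/
def IsSalient {n : ℕ} (C : Set (Fin n → ℝ)) : Prop :=
  ∀ x ∈ C, -x ∈ C → x = 0

/-- if a facet `F` of a full-dimensional polyhedral cone `C` is
invariant under a subgroup `H` of the symmetry group `G` of `C`, then
`F ∩ C_H` is a facet of the fixed cone `C_H`. -/
private lemma sum_mem_cone {n : ℕ} {D : Set (Fin n → ℝ)}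
    (h0 : (0 : Fin n → ℝ) ∈ D)
    (hsmul : ∀ (c : ℝ), 0 ≤ c → ∀ x ∈ D, c • x ∈ D)
    (hadd : ∀ x ∈ D, ∀ y ∈ D, x + y ∈ D)
    {ι : Type*} [DecidableEq ι] (t : Finset ι) (w : ι → ℝ) (v : ι → Fin n → ℝ)
    (hw : ∀ i ∈ t, 0 ≤ w i) (hv : ∀ i ∈ t, v i ∈ D) :
    (∑ i ∈ t, w i • v i) ∈ D := by
  induction t using Finset.induction with
  | empty => simpa using h0
  | insert _ _ hx ih =>
    rw [Finset.sum_insert hx]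
    exact hadd _ (hsmul _ (hw _ (Finset.mem_insert_self _ _)) _
        (hv _ (Finset.mem_insert_self _ _))) _
      (ih (fun i hi => hw i (Finset.mem_insert_of_mem hi))
        (fun i hi => hv i (Finset.mem_insert_of_mem hi)))

theorem facet_of_fixed_cone {n : ℕ} (C : Set (Fin n → ℝ))
    (hC : IsPolyhedralCone C)
    (hfull : Submodule.span ℝ C = ⊤)
    (G : Subgroup ((Fin n → ℝ) ≃ₗ[ℝ] (Fin n → ℝ))) [Finite G]
    (hG : ∀ g ∈ G, ⇑g '' C = C)
    (H : Subgroup ((Fin n → ℝ) ≃ₗ[ℝ] (Fin n → ℝ))) (hHG : H ≤ G)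
    (CH : Set (Fin n → ℝ)) (hCH : CH = {x ∈ C | ∀ h ∈ H, h x = x})
    (m : ℕ) (hm : m = faceDim CH)
    (f : (Fin n → ℝ) →ₗ[ℝ] ℝ) (hf : ∀ x ∈ C, 0 ≤ f x)
    (F : Set (Fin n → ℝ)) (hF : F = {x ∈ C | f x = 0})
    (hFdim : faceDim F = n - 1)
    (hFsym : ∀ h ∈ H, ⇑h '' F = F) :
    F ∩ CH = {x ∈ CH | f x = 0} ∧
    IsFaceOf CH {x ∈ CH | f x = 0} ∧
    faceDim {x ∈ CH | f x = 0} = m - 1 := by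
  classical
  have hCHC : CH ⊆ C := by rw [hCH]; exact fun x hx => hx.1
  have hFC : F ⊆ C := by rw [hF]; exact fun x hx => hx.1
  have part1 : F ∩ CH = {x ∈ CH | f x = 0} := by
    rw [hF, hCH]; ext x
    simp only [Set.mem_inter_iff, Set.mem_setOf_eq]; tauto
  have part2 : IsFaceOf CH {x ∈ CH | f x = 0} :=
    ⟨f, fun x hx => hf x (hCHC hx), rfl⟩
  refine ⟨part1, part2, ?_⟩
  -- dimension part
  set S : Set (Fin n → ℝ) := {x ∈ CH | f x = 0} with hS
  show Module.finrank ℝ (Submodule.span ℝ S) = m - 1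
  rcases Nat.eq_zero_or_pos n with hn | hn
  · subst hn
    have h1 : Module.finrank ℝ (Submodule.span ℝ S) ≤ Module.finrank ℝ (Fin 0 → ℝ) :=
      Submodule.finrank_le _
    have h2 : m ≤ Module.finrank ℝ (Fin 0 → ℝ) := by
      rw [hm]; exact Submodule.finrank_le _
    rw [Module.finrank_fin_fun] at h1 h2
    omega
  -- cone properties of C
  obtain ⟨N, φ, hCrep⟩ := hC
  have hC0 : (0 : Fin n → ℝ) ∈ C := by rw [hCrep]; intro i; simp
  have hCsmul : ∀ (c : ℝ), 0 ≤ c → ∀ x ∈ C, c • x ∈ C := by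
    rw [hCrep]; intro c hc x hx i
    rw [Set.mem_setOf_eq] at hx
    simpa using mul_nonneg hc (hx i)
  have hCadd : ∀ x ∈ C, ∀ y ∈ C, x + y ∈ C := by
    rw [hCrep]; intro x hx y hy i
    rw [Set.mem_setOf_eq] at hx hy
    simpa using add_nonneg (hx i) (hy i)
  -- cone properties of F
  have hF0 : (0 : Fin n → ℝ) ∈ F := by rw [hF]; exact ⟨hC0, map_zero f⟩
  have hFsmul : ∀ (c : ℝ), 0 ≤ c → ∀ x ∈ F, c • x ∈ F := by
    rw [hF]; rintro c hc x ⟨hxC, hxf⟩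
    exact ⟨hCsmul c hc x hxC, by simp [hxf]⟩
  have hFadd : ∀ x ∈ F, ∀ y ∈ F, x + y ∈ F := by
    rw [hF]; rintro x ⟨hxC, hxf⟩ y ⟨hyC, hyf⟩
    exact ⟨hCadd x hxC y hyC, by simp [hxf, hyf]⟩
  -- finiteness of H
  haveI : Finite H := Finite.of_injective (Subgroup.inclusion hHG)
    (Subgroup.inclusion_injective hHG)
  haveI : Fintype H := Fintype.ofFinite H
  have hcard : 0 < (Fintype.card H : ℝ) := by
    exact_mod_cast Fintype.card_pos
  -- the averaging projector
  set π : (Fin n → ℝ) →ₗ[ℝ] (Fin n → ℝ) :=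
    (Fintype.card H : ℝ)⁻¹ • ∑ h : H,
      ((h : (Fin n → ℝ) ≃ₗ[ℝ] (Fin n → ℝ)) : (Fin n → ℝ) →ₗ[ℝ] (Fin n → ℝ)) with hπ
  have hπapp : ∀ x, π x = (Fintype.card H : ℝ)⁻¹ •
      ∑ h : H, (h : (Fin n → ℝ) ≃ₗ[ℝ] (Fin n → ℝ)) x := by
    intro x; simp [hπ]
  have hπmem : ∀ (D : Set (Fin n → ℝ)), (0:Fin n → ℝ) ∈ D →
      (∀ (c : ℝ), 0 ≤ c → ∀ x ∈ D, c • x ∈ D) →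
      (∀ x ∈ D, ∀ y ∈ D, x + y ∈ D) →
      (∀ h ∈ H, ∀ x ∈ D, (h : (Fin n → ℝ) ≃ₗ[ℝ] (Fin n → ℝ)) x ∈ D) →
      ∀ x ∈ D, π x ∈ D := by
    intro D h0 hsm had hinv x hx
    rw [hπapp, Finset.smul_sum]
    exact sum_mem_cone h0 hsm had Finset.univ _ _
      (fun h _ => by positivity)
      (fun h _ => hinv h h.2 x hx)
  have hCinv : ∀ h ∈ H, ∀ x ∈ C, (h : (Fin n → ℝ) ≃ₗ[ℝ] (Fin n → ℝ)) x ∈ C := by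
    intro h hh x hx
    have := hG h (hHG hh)
    rw [← this]
    exact Set.mem_image_of_mem _ hx
  have hFinv : ∀ h ∈ H, ∀ x ∈ F, (h : (Fin n → ℝ) ≃ₗ[ℝ] (Fin n → ℝ)) x ∈ F := by
    intro h hh x hx
    rw [← hFsym h hh]
    exact Set.mem_image_of_mem _ hx
  -- π x is fixed by H
  have hπfix : ∀ x, ∀ h ∈ H, (h : (Fin n → ℝ) ≃ₗ[ℝ] (Fin n → ℝ)) (π x) = π x := by
    intro x h hh
    rw [hπapp, map_smul, map_sum]
    congr 1
    exact Fintype.sum_equiv (Equiv.mulLeft (⟨h, hh⟩ : H)) _ _ (fun h' => rfl)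
  -- π fixes fixed vectors
  have hπid : ∀ z, (∀ h ∈ H, (h : (Fin n → ℝ) ≃ₗ[ℝ] (Fin n → ℝ)) z = z) → π z = z := by
    intro z hz
    rw [hπapp]
    have : ∀ h : H, (h : (Fin n → ℝ) ≃ₗ[ℝ] (Fin n → ℝ)) z = z := fun h => hz h h.2
    rw [Finset.sum_congr rfl (fun h _ => this h), Finset.sum_const, Finset.card_univ,
      ← Nat.cast_smul_eq_nsmul ℝ, smul_smul, inv_mul_cancel₀ (ne_of_gt hcard), one_smul]
  have hπCH : ∀ x ∈ C, π x ∈ CH := by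
    intro x hx
    rw [hCH]
    exact ⟨hπmem C hC0 hCsmul hCadd hCinv x hx, hπfix x⟩
  -- span CH consists of fixed vectors
  have hfixspan : ∀ z ∈ Submodule.span ℝ CH, ∀ h ∈ H,
      (h : (Fin n → ℝ) ≃ₗ[ℝ] (Fin n → ℝ)) z = z := by
    intro z hz h hh
    have hle : Submodule.span ℝ CH ≤ LinearMap.ker
        (((h : (Fin n → ℝ) ≃ₗ[ℝ] (Fin n → ℝ)) :
          (Fin n → ℝ) →ₗ[ℝ] (Fin n → ℝ)) - LinearMap.id) := by
      rw [Submodule.span_le]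
      intro x hx
      rw [hCH] at hx
      simp only [SetLike.mem_coe, LinearMap.mem_ker, LinearMap.sub_apply,
        LinearEquiv.coe_coe, LinearMap.id_apply]
      rw [hx.2 h hh, sub_self]
    have := hle hz
    simp only [LinearMap.mem_ker, LinearMap.sub_apply, LinearEquiv.coe_coe,
      LinearMap.id_apply] at this
    exact sub_eq_zero.mp this
  -- F is contained in ker f
  have hFker : ∀ x ∈ F, f x = 0 := by rw [hF]; exact fun x hx => hx.2
  -- there is a point of C with f x > 0
  have hx0 : ∃ x ∈ C, 0 < f x := by
    by_contra hcon
    push_neg at hcon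
    have hCF : C ⊆ F := by
      rw [hF]
      exact fun x hx => ⟨hx, le_antisymm (hcon x hx) (hf x hx)⟩
    have : Submodule.span ℝ C ≤ Submodule.span ℝ F := Submodule.span_mono hCF
    rw [hfull, top_le_iff] at this
    have : faceDim F = n := by
      rw [faceDim, this, finrank_top, Module.finrank_fin_fun]
    omega
  obtain ⟨x₀, hx₀C, hx₀f⟩ := hx0
  -- the averaged point w₀ ∈ CH with f w₀ > 0
  set w₀ := π x₀ with hw₀
  have hw₀CH : w₀ ∈ CH := hπCH x₀ hx₀C
  have hw₀f : 0 < f w₀ := by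
    rw [hw₀, hπapp, map_smul, map_sum]
    have hpos : 0 < ∑ h : H, f ((h : (Fin n → ℝ) ≃ₗ[ℝ] (Fin n → ℝ)) x₀) := by
      apply Finset.sum_pos'
      · exact fun h _ => hf _ (hCinv h h.2 x₀ hx₀C)
      · exact ⟨1, Finset.mem_univ _, hx₀f⟩
    rw [smul_eq_mul]
    exact mul_pos (by positivity) hpos
  -- f is nonzero, so its kernel has dimension n - 1
  have hker : Module.finrank ℝ (LinearMap.ker f) = n - 1 := by
    have hr := LinearMap.finrank_range_add_finrank_ker f
    rw [Module.finrank_fin_fun] at hr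
    have hrange : LinearMap.range f = ⊤ := by
      rw [LinearMap.range_eq_top]
      intro r
      exact ⟨(r / f w₀) • w₀, by rw [map_smul, smul_eq_mul]; field_simp⟩
    rw [hrange, finrank_top, Module.finrank_self] at hr
    omega
  -- span F = ker f
  have hspanF : Submodule.span ℝ F = LinearMap.ker f := by
    apply Submodule.eq_of_le_of_finrank_le
    · rw [Submodule.span_le]; exact fun x hx => hFker x hx
    · rw [hker]
      rw [faceDim] at hFdim
      omega
  set W := Submodule.span ℝ CH with hW
  -- lower bound : W ⊓ ker f ≤ span S
  have hlower : W ⊓ LinearMap.ker f ≤ Submodule.span ℝ S := by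
    rintro z ⟨hzW, hzker⟩
    have hzfix : ∀ h ∈ H, (h : (Fin n → ℝ) ≃ₗ[ℝ] (Fin n → ℝ)) z = z :=
      hfixspan z hzW
    have hzF : z ∈ Submodule.span ℝ F := by rw [hspanF]; exact hzker
    obtain ⟨c, hsupp, hzsum⟩ := Submodule.mem_span_set.mp hzF
    set t := c.support with ht
    have hzrep : z = ∑ v ∈ t, c v • v := by
      rw [← hzsum]; rfl
    -- choose ε
    set B : ℝ := ∑ v ∈ t, |c v| with hB
    have hB0 : 0 ≤ B := Finset.sum_nonneg (fun v _ => abs_nonneg _)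
    set ε : ℝ := (1 + B)⁻¹ with hε
    have hε0 : 0 < ε := by positivity
    have hcoef : ∀ v ∈ t, 0 ≤ 1 + ε * c v := by
      intro v hv
      have h1 : |c v| ≤ B :=
        Finset.single_le_sum (fun i _ => abs_nonneg (c i)) hv
      have h2 : ε * B ≤ 1 := by
        rw [hε]
        rw [inv_mul_le_iff₀ (by positivity)]
        linarith
      have h3 : -(ε * B) ≤ ε * c v := by
        have := neg_abs_le (c v)
        nlinarith [abs_nonneg (c v)]
      linarith
    -- y0 and y1 are in F
    set y0 : Fin n → ℝ := ∑ v ∈ t, (1:ℝ) • v with hy0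
    have hy0F : y0 ∈ F :=
      sum_mem_cone hF0 hFsmul hFadd t _ _ (fun v _ => zero_le_one)
        (fun v hv => hsupp hv)
    set y1 : Fin n → ℝ := ∑ v ∈ t, (1 + ε * c v) • v with hy1
    have hy1F : y1 ∈ F :=
      sum_mem_cone hF0 hFsmul hFadd t _ _ hcoef (fun v hv => hsupp hv)
    have hy1eq : y1 = y0 + ε • z := by
      rw [hy1, hy0, hzrep, Finset.smul_sum, ← Finset.sum_add_distrib]
      apply Finset.sum_congr rfl
      intro v _
      simp [add_smul, smul_smul]
    -- π of both is in S
    have hmemS : ∀ y ∈ F, π y ∈ S := by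
      intro y hy
      refine ⟨hπCH y (hFC hy), ?_⟩
      exact hFker _ (hπmem F hF0 hFsmul hFadd hFinv y hy)
    have h0S : π y0 ∈ Submodule.span ℝ S := Submodule.subset_span (hmemS y0 hy0F)
    have h1S : π y1 ∈ Submodule.span ℝ S := Submodule.subset_span (hmemS y1 hy1F)
    have hπy1 : π y1 = π y0 + ε • z := by
      rw [hy1eq, map_add, map_smul, hπid z hzfix]
    have hzeq : z = ε⁻¹ • (π y1 - π y0) := by
      rw [hπy1]
      rw [add_sub_cancel_left, smul_smul, inv_mul_cancel₀ (ne_of_gt hε0), one_smul]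
    rw [hzeq]
    exact Submodule.smul_mem _ _ (Submodule.sub_mem _ h1S h0S)
  -- upper bound : span S ≤ W ⊓ ker f
  have hupper : Submodule.span ℝ S ≤ W ⊓ LinearMap.ker f := by
    rw [Submodule.span_le]
    rintro x ⟨hxCH, hxf⟩
    exact ⟨Submodule.subset_span hxCH, hxf⟩
  have hSspan : Submodule.span ℝ S = W ⊓ LinearMap.ker f :=
    le_antisymm hupper hlower
  -- dimension count
  have hsum := Submodule.finrank_sup_add_finrank_inf_eq W (LinearMap.ker f)
  have hwW : w₀ ∈ W := Submodule.subset_span hw₀CH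
  have hm1 : 1 ≤ m := by
    rcases Nat.eq_zero_or_pos m with h0 | h; swap
    · omega
    · exfalso
      have : W = ⊥ := by
        rw [hm, faceDim] at h0
        exact Submodule.finrank_eq_zero.mp h0
      rw [this, Submodule.mem_bot] at hwW
      rw [hwW, map_zero] at hw₀f
      exact lt_irrefl _ hw₀f
  have hsup : Module.finrank ℝ ↥(W ⊔ LinearMap.ker f) = n := by
    have hle : Module.finrank ℝ ↥(W ⊔ LinearMap.ker f) ≤ n := by
      have := Submodule.finrank_le (W ⊔ LinearMap.ker f)
      rwa [Module.finrank_fin_fun] at this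
    by_contra hne
    have hlt : Module.finrank ℝ ↥(W ⊔ LinearMap.ker f) ≤ n - 1 := by omega
    have heq : LinearMap.ker f = W ⊔ LinearMap.ker f :=
      Submodule.eq_of_le_of_finrank_le le_sup_right (by omega)
    have : w₀ ∈ LinearMap.ker f := by
      rw [heq]
      exact Submodule.mem_sup_left hwW
    rw [LinearMap.mem_ker] at this
    rw [this] at hw₀f
    exact lt_irrefl _ hw₀f
  rw [hSspan]
  rw [hsup, hker] at hsum
  have hmW : Module.finrank ℝ ↥W = m := by rw [hm]; rfl
  omega
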